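/- Let c : ℕ × ℕ → ℝ be a finitely supported function with c(α,β) = 0 whenever α = 0 or β = 0. If Σ_{α,β ≥ 1} c(α,β) · (1−|z|²)^{α} / |1−z|^{2β} = 0 for every z in the open unit disc 𝔻, then c(α,β) = 0 for all α, β. In other words, the functions z ↦ (1−|z|²)^{α}/|1−z|^{2β}, for integers α, β ≥ 1, are linearly independent over ℝ as functions on 𝔻. -/

import Mathlib

open Polynomial
theorem stmt6 (c : ℕ × ℕ → ℝ) (hfin : (Function.support c).Finite)
    (hzero : ∀ p : ℕ × ℕ, p.1 = 0 ∨ p.2 = 0 → c p = 0)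
    (h : ∀ z : ℂ, ‖z‖ < 1 →
      (∑ᶠ p : ℕ × ℕ,
        c p * (1 - ‖z‖ ^ 2) ^ p.1 / ‖1 - z‖ ^ (2 * p.2)) = 0) :
    ∀ p : ℕ × ℕ, c p = 0 := by
  classical
  set S : Finset (ℕ × ℕ) := hfin.toFinset with hSdef
  set N : ℕ := S.sup Prod.snd with hNdef
  have key : ∀ t ∈ Set.Ioo (5/8 : ℝ) (7/8), ∀ s ∈ Set.Ioo (9/8 : ℝ) (11/8),
      ∑ p ∈ S, c p * t ^ p.1 * s ^ (N - p.2) = 0 := by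
    intro t ht s hs
    obtain ⟨ht1, ht2⟩ := ht
    obtain ⟨hs1, hs2⟩ := hs
    set x : ℝ := (2 - t - s) / 2 with hxdef
    have hx1 : -(1/8 : ℝ) < x := by rw [hxdef]; linarith
    have hx2 : x < 1/8 := by rw [hxdef]; linarith
    have hy2pos : (0:ℝ) < 1 - x ^ 2 - t := by nlinarith
    set y : ℝ := Real.sqrt (1 - x ^ 2 - t) with hydef
    have hy : y ^ 2 = 1 - x ^ 2 - t := Real.sq_sqrt hy2pos.le
    set z : ℂ := ⟨x, y⟩ with hzdef
    have habs : ‖z‖ ^ 2 = x ^ 2 + y ^ 2 := by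
      rw [Complex.sq_norm, hzdef, Complex.normSq_mk]; ring
    have h1 : (1 : ℝ) - ‖z‖ ^ 2 = t := by rw [habs]; nlinarith
    have habs2 : ‖1 - z‖ ^ 2 = s := by
      rw [Complex.sq_norm, Complex.normSq_apply]
      simp only [hzdef, Complex.sub_re, Complex.sub_im, Complex.one_re, Complex.one_im]
      nlinarith
    have hzlt : ‖z‖ < 1 := by
      nlinarith [norm_nonneg z, habs, hy]
    have hsum := h z hzlt
    rw [finsum_eq_sum_of_support_subset _
      (s := S) (by
        intro p hp
        rw [Function.mem_support] at hp
        rw [hSdef, Set.Finite.coe_toFinset, Function.mem_support]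
        intro hc
        exact hp (by rw [hc]; ring))] at hsum
    have hsum' : ∑ p ∈ S, c p * t ^ p.1 / s ^ p.2 = 0 := by
      rw [← hsum]
      apply Finset.sum_congr rfl
      intro p _
      rw [h1, pow_mul, habs2]
    have hs0 : s ≠ 0 := by positivity
    calc ∑ p ∈ S, c p * t ^ p.1 * s ^ (N - p.2)
        = ∑ p ∈ S, (c p * t ^ p.1 / s ^ p.2) * s ^ N := by
          apply Finset.sum_congr rfl
          intro p hp
          have hβ : p.2 ≤ N := Finset.le_sup (f := Prod.snd) hp
          rw [pow_sub₀ s hs0 hβ]; ring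
      _ = (∑ p ∈ S, c p * t ^ p.1 / s ^ p.2) * s ^ N := by rw [Finset.sum_mul]
      _ = 0 := by rw [hsum', zero_mul]
  -- polynomial argument
  set Q : Polynomial (Polynomial ℝ) :=
    ∑ p ∈ S, C (C (c p) * X ^ p.1) * X ^ (N - p.2) with hQdef
  have hQt : ∀ t ∈ Set.Ioo (5/8 : ℝ) (7/8), Q.map (evalRingHom t) = 0 := by
    intro t ht
    apply Polynomial.eq_zero_of_infinite_isRoot
    apply Set.Infinite.mono (s := Set.Ioo (9/8 : ℝ) (11/8))
    · intro s hs
      simp only [Set.mem_setOf_eq, IsRoot.def]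
      rw [hQdef, Polynomial.map_sum]
      rw [Polynomial.eval_finset_sum]
      rw [← key t ht s hs]
      apply Finset.sum_congr rfl
      intro p _
      simp [coe_evalRingHom]
    · exact Set.Ioo_infinite (by norm_num)
  have hQ : Q = 0 := by
    ext k n
    have hcoef : Q.coeff k = 0 := by
      apply Polynomial.eq_zero_of_infinite_isRoot
      apply Set.Infinite.mono (s := Set.Ioo (5/8 : ℝ) (7/8))
      · intro t ht
        simp only [Set.mem_setOf_eq, IsRoot.def]
        have := hQt t ht
        have h2 := congrArg (fun q => Polynomial.coeff q k) this
        simpa [Polynomial.coeff_map, coe_evalRingHom] using h2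
      · exact Set.Ioo_infinite (by norm_num)
    simp [hcoef]
  intro p
  by_cases hp : p ∈ S
  · have hβ : p.2 ≤ N := Finset.le_sup (f := Prod.snd) hp
    have h2 := congrArg (fun q => (Polynomial.coeff q (N - p.2)).coeff p.1) hQ
    simp only [hQdef, Polynomial.finset_sum_coeff, Polynomial.coeff_zero] at h2
    have hval : (∑ b ∈ S,
        ((C (C (c b) * X ^ b.1) * X ^ (N - b.2)).coeff (N - p.2)).coeff p.1) = c p := by
      rw [Finset.sum_eq_single p]
      · rw [Polynomial.coeff_C_mul_X_pow, if_pos rfl, Polynomial.coeff_C_mul_X_pow, if_pos rfl]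
      · intro p' hp' hne
        have hβ' : p'.2 ≤ N := Finset.le_sup (f := Prod.snd) hp'
        by_cases hcase : N - p.2 = N - p'.2
        · have heq2 : p'.2 = p.2 := by omega
          have hne1 : p.1 ≠ p'.1 := by
            intro h1
            exact hne (Prod.ext h1.symm heq2)
          rw [hcase, Polynomial.coeff_C_mul_X_pow, if_pos rfl,
            Polynomial.coeff_C_mul_X_pow, if_neg hne1]
        · rw [Polynomial.coeff_C_mul_X_pow, if_neg hcase, Polynomial.coeff_zero]
      · intro hnp; exact absurd hp hnp
    rw [hval] at h2
    exact h2
  · rw [hSdef, Set.Finite.mem_toFinset, Function.mem_support, not_not] at hp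
    exact hp
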